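/- Let X' be a compact connected Lipschitz (n+1)-manifold with boundary, covered by finitely many subsets T₁,…,T_m each bi-Lipschitz homeomorphic to a closed (n+1)-ball, such that any two sets T_i, T_j with nonempty intersection satisfy H^{n+1}(T_i ∩ T_j) > 0. Suppose for each i and each ξ' > 0 there is ε_i > 0 such that any n-rectifiable Y ⊆ T_i with H^n(Y) < ε_i leaves a component of T_i \ Y of measure > H^{n+1}(T_i) − ξ'. Then for every ξ > 0 there exists ε > 0 such that for every n-dimensional rectifiable subset Y' ⊆ X' with H^n(Y') < ε, the complement X' \ Y' has a connected component A with H^{n+1}(A) > H^{n+1}(X') − ξ/2. -/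

import Mathlib

open MeasureTheory Metric Filter Set Topology
open scoped ENNReal NNReal

noncomputable section

variable {E : Type*} [MetricSpace E] [MeasurableSpace E] [BorelSpace E]

/-- A set is `k`-rectifiable if up to an `H^k`-null set it is covered by countably many
Lipschitz images of `ℝ^k`. -/
def IsRectifiableSet (k : ℕ) (Y : Set E) : Prop :=
  ∃ (f : ℕ → EuclideanSpace ℝ (Fin k) → E) (N : Set E),
    (∀ i, ∃ C : ℝ≥0, LipschitzWith C (f i)) ∧ μH[(k : ℝ)] N = 0 ∧
      Y ⊆ N ∪ ⋃ i, Set.range (f i)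

/-- Inferior `k`-density of `W` at `x` (up to the normalizing constant η). -/
def infDensity (k : ℝ) (W : Set E) (x : E) : ℝ≥0∞ :=
  Filter.liminf (fun r : ℝ => μH[k] (W ∩ closedBall x r) / ENNReal.ofReal (r ^ k)) (𝓝[>] 0)

/-- Superior `k`-density of `W` at `x` (up to the normalizing constant η). -/
def supDensity (k : ℝ) (W : Set E) (x : E) : ℝ≥0∞ :=
  Filter.limsup (fun r : ℝ => μH[k] (W ∩ closedBall x r) / ENNReal.ofReal (r ^ k)) (𝓝[>] 0)

/-- `Y` is a separating set of the `k`-dimensional set `X` at `x₀`: it is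
`(k-1)`-rectifiable, contains `x₀`, has zero superior `(k-1)`-density at `x₀`, and for some
small ε it separates `X ∩ εB(x₀)` into (at least) two connected components of nonzero
inferior `k`-density at `x₀`. -/
def IsSeparatingSet (k : ℕ) (X : Set E) (x₀ : E) (Y : Set E) : Prop :=
  x₀ ∈ Y ∧ Y ⊆ X ∧ IsRectifiableSet (k - 1) Y ∧
    supDensity ((k : ℝ) - 1) Y x₀ = 0 ∧
    ∃ ε : ℝ, 0 < ε ∧ ∃ a b : E,
      a ∈ (X ∩ closedBall x₀ ε) \ Y ∧ b ∈ (X ∩ closedBall x₀ ε) \ Y ∧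
      connectedComponentIn ((X ∩ closedBall x₀ ε) \ Y) a ≠
        connectedComponentIn ((X ∩ closedBall x₀ ε) \ Y) b ∧
      infDensity k (connectedComponentIn ((X ∩ closedBall x₀ ε) \ Y) a) x₀ ≠ 0 ∧
      infDensity k (connectedComponentIn ((X ∩ closedBall x₀ ε) \ Y) b) x₀ ≠ 0

/-- `X` has a separating set at `x₀`. -/
def HasSeparatingSet (k : ℕ) (X : Set E) (x₀ : E) : Prop :=
  ∃ Y : Set E, IsSeparatingSet k X x₀ Y

noncomputable section

/-- `M` is an `n`-dimensional Lipschitz manifold (possibly with boundary): every point has a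
neighborhood in `M` which is a bi-Lipschitz image of a relatively open subset of the closed
half-space of `ℝⁿ`. -/
def IsLipschitzManifoldWithBoundary (n : ℕ) {E : Type*} [MetricSpace E] (M : Set E) : Prop :=
  ∀ x ∈ M, ∃ (f : EuclideanSpace ℝ (Fin n) → E) (V : Set (EuclideanSpace ℝ (Fin n))) (K : ℝ),
    1 ≤ K ∧
    (∃ O : Set (EuclideanSpace ℝ (Fin n)), IsOpen O ∧
      V = O ∩ {v | ∀ j : Fin n, (j : ℕ) = 0 → 0 ≤ v j}) ∧
    x ∈ f '' V ∧ (∃ ρ : ℝ, 0 < ρ ∧ M ∩ ball x ρ ⊆ f '' V) ∧ f '' V ⊆ M ∧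
    ∀ a ∈ V, ∀ b ∈ V, dist a b ≤ K * dist (f a) (f b) ∧ dist (f a) (f b) ≤ K * dist a b

/-- `T` is a bi-Lipschitz image of the closed unit ball of `ℝⁿ`. -/
def IsBiLipschitzBall (n : ℕ) {E : Type*} [MetricSpace E] (T : Set E) : Prop :=
  ∃ (f : EuclideanSpace ℝ (Fin n) → E) (K : ℝ), 1 ≤ K ∧
    T = f '' closedBall 0 1 ∧
    ∀ a ∈ closedBall (0 : EuclideanSpace ℝ (Fin n)) 1, ∀ b ∈ closedBall (0 : EuclideanSpace ℝ (Fin n)) 1,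
      dist a b ≤ K * dist (f a) (f b) ∧ dist (f a) (f b) ≤ K * dist a b



private lemma euclBall_hausdorff_ne_top_aux (k : ℕ) :
    μH[(k : ℝ)] (closedBall (0 : EuclideanSpace ℝ (Fin k)) 1) ≠ ∞ := by
  set e := EuclideanSpace.equiv (Fin k) ℝ with he
  have hvol : (μH[(k:ℝ)] : Measure ((Fin k) → ℝ)) = volume := by
    have := hausdorffMeasure_pi_real (ι := Fin k)
    rwa [Fintype.card_fin] at this
  have hL := (e.symm : (Fin k → ℝ) →L[ℝ] EuclideanSpace ℝ (Fin k)).lipschitz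
  have h1 : closedBall (0:EuclideanSpace ℝ (Fin k)) 1 ⊆
      ⇑(e.symm : (Fin k → ℝ) →L[ℝ] EuclideanSpace ℝ (Fin k)) '' (e '' closedBall 0 1) := by
    intro x hx
    exact ⟨e x, mem_image_of_mem _ hx, e.symm_apply_apply x⟩
  have h2 := hL.hausdorffMeasure_image_le (d := (k:ℝ)) (Nat.cast_nonneg k) (e '' closedBall 0 1)
  have h3 : μH[(k:ℝ)] (e '' closedBall (0:EuclideanSpace ℝ (Fin k)) 1) < ∞ := by
    rw [hvol]
    exact ((isCompact_closedBall _ _).image e.continuous).measure_lt_top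
  refine ne_of_lt (lt_of_le_of_lt ((measure_mono h1).trans h2) ?_)
  exact ENNReal.mul_lt_top (ENNReal.rpow_lt_top_of_nonneg (Nat.cast_nonneg k) ENNReal.coe_ne_top) h3

private lemma biLip_props_aux {E : Type*} [MetricSpace E] [MeasurableSpace E] [BorelSpace E]
    {k : ℕ} {T : Set E} (h : IsBiLipschitzBall k T) :
    IsCompact T ∧ μH[(k : ℝ)] T ≠ ∞ ∧ T.Nonempty := by
  obtain ⟨f, K, hK, rfl, hbi⟩ := h
  have hlip : LipschitzOnWith K.toNNReal f (closedBall 0 1) := by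
    apply LipschitzOnWith.of_dist_le_mul
    intro x hx y hy
    have := (hbi x hx y hy).2
    rwa [Real.coe_toNNReal K (by linarith)]
  refine ⟨(isCompact_closedBall _ _).image_of_continuousOn hlip.continuousOn, ?_,
    ⟨f 0, mem_image_of_mem f (mem_closedBall_self zero_le_one)⟩⟩
  have h2 := hlip.hausdorffMeasure_image_le (d := (k:ℝ)) (Nat.cast_nonneg k)
  refine ne_of_lt (lt_of_le_of_lt h2 ?_)
  exact ENNReal.mul_lt_top (ENNReal.rpow_lt_top_of_nonneg (Nat.cast_nonneg k) ENNReal.coe_ne_top)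
    (lt_top_iff_ne_top.mpr (euclBall_hausdorff_ne_top_aux k))

private lemma connectedComponentIn_eq_closure_inter_aux {α : Type*} [TopologicalSpace α]
    (s : Set α) (x : α) :
    connectedComponentIn s x = closure (connectedComponentIn s x) ∩ s := by
  by_cases hx : x ∈ s
  · refine subset_antisymm (subset_inter subset_closure (connectedComponentIn_subset s x)) ?_
    refine IsPreconnected.subset_connectedComponentIn ?_ ?_ inter_subset_right
    · exact isPreconnected_connectedComponentIn.subset_closure
        (subset_inter subset_closure (connectedComponentIn_subset s x)) inter_subset_left
    · exact ⟨subset_closure (mem_connectedComponentIn hx), hx⟩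
  · rw [connectedComponentIn_eq_empty hx]; simp


/-- Let X' be a compact connected Lipschitz (n+1)-manifold with boundary,
covered by finitely many bi-Lipschitz balls T₁,…,T_m such that intersecting pairs intersect
in positive H^{n+1}-measure, and suppose each T i has the isoperimetric property that small
n-measure separating sets leave one component of almost full measure.  Then for every ξ > 0
there is ε > 0 such that any n-rectifiable Y' ⊆ X' with H^n(Y') < ε leaves a connected
component A of X' \ Y' with H^{n+1}(A) > H^{n+1}(X') − ξ/2. -/
theorem stmt6 {E : Type*} [MetricSpace E] [MeasurableSpace E] [BorelSpace E]
    (n : ℕ) (X' : Set E) (hX'm : IsLipschitzManifoldWithBoundary (n + 1) X')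
    (hX'c : IsCompact X') (hX'conn : IsConnected X')
    (m : ℕ) (T : Fin m → Set E) (hTcover : X' = ⋃ i, T i) (hTsub : ∀ i, T i ⊆ X')
    (hTball : ∀ i, IsBiLipschitzBall (n + 1) (T i))
    (hTint : ∀ i j, (T i ∩ T j).Nonempty → 0 < μH[((n : ℝ) + 1)] (T i ∩ T j))
    (hTiso : ∀ i, ∀ ξ' : ℝ, 0 < ξ' → ∃ εi : ℝ, 0 < εi ∧
      ∀ Y : Set E, Y ⊆ T i → IsRectifiableSet n Y → μH[(n : ℝ)] Y < ENNReal.ofReal εi →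
        ∃ a ∈ T i \ Y, μH[((n : ℝ) + 1)] (T i) - ENNReal.ofReal ξ' <
          μH[((n : ℝ) + 1)] (connectedComponentIn (T i \ Y) a)) :
    ∀ ξ : ℝ, 0 < ξ → ∃ ε : ℝ, 0 < ε ∧
      ∀ Y' : Set E, Y' ⊆ X' → IsRectifiableSet n Y' → μH[(n : ℝ)] Y' < ENNReal.ofReal ε →
        ∃ a ∈ X' \ Y', μH[((n : ℝ) + 1)] X' - ENNReal.ofReal (ξ / 2) <
          μH[((n : ℝ) + 1)] (connectedComponentIn (X' \ Y') a) := by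
  classical
  intro ξ hξ
  have hcast : ((n + 1 : ℕ) : ℝ) = (n : ℝ) + 1 := by push_cast; ring
  have hTprop : ∀ i, IsCompact (T i) ∧ μH[((n:ℝ)+1)] (T i) ≠ ∞ ∧ (T i).Nonempty := by
    intro i
    have := biLip_props_aux (hTball i)
    rwa [hcast] at this
  have hTcomp : ∀ i, IsCompact (T i) := fun i => (hTprop i).1
  have hTfin : ∀ i, μH[((n:ℝ)+1)] (T i) ≠ ∞ := fun i => (hTprop i).2.1
  have hTne : ∀ i, (T i).Nonempty := fun i => (hTprop i).2.2
  have hX'fin : μH[((n:ℝ)+1)] X' ≠ ∞ := by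
    rw [hTcover]
    refine ne_of_lt (lt_of_le_of_lt (measure_iUnion_le T) ?_)
    rw [tsum_fintype]
    exact ENNReal.sum_lt_top.mpr fun i _ => lt_top_iff_ne_top.mpr (hTfin i)
  by_cases hm : m = 0
  · exfalso
    obtain ⟨x, hx⟩ := hX'conn.nonempty
    rw [hTcover] at hx
    subst hm
    rw [iUnion_of_empty] at hx
    exact hx
  have i₀ : Fin m := ⟨0, Nat.pos_of_ne_zero hm⟩
  obtain ⟨δ, hδpos, hδle⟩ : ∃ δ : ℝ≥0∞, 0 < δ ∧
      ∀ i j, (T i ∩ T j).Nonempty → δ ≤ μH[((n:ℝ)+1)] (T i ∩ T j) := by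
    set g : Fin m × Fin m → ℝ≥0∞ := fun p =>
      if (T p.1 ∩ T p.2).Nonempty then μH[((n:ℝ)+1)] (T p.1 ∩ T p.2) else 1 with hg
    have hune : (Finset.univ : Finset (Fin m × Fin m)).Nonempty :=
      ⟨(i₀, i₀), Finset.mem_univ _⟩
    refine ⟨Finset.univ.inf' hune g, ?_, ?_⟩
    · rw [Finset.lt_inf'_iff]
      intro p _
      rw [hg]
      dsimp only
      split_ifs with hp
      · exact hTint p.1 p.2 hp
      · exact zero_lt_one
    · intro i j h
      have h1 : g (i, j) = μH[((n:ℝ)+1)] (T i ∩ T j) := by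
        rw [hg]
        exact if_pos h
      exact h1 ▸ Finset.inf'_le g (Finset.mem_univ (i, j))
  set r : ℝ≥0∞ := min δ 1 with hr
  have hrpos : 0 < r := lt_min hδpos zero_lt_one
  have hrne : r ≠ ∞ := ne_top_of_le_ne_top ENNReal.one_ne_top (min_le_right _ _)
  have hrt : 0 < r.toReal := ENNReal.toReal_pos hrpos.ne' hrne
  set ξ' : ℝ := min (ξ / (4 * (m + 1))) (r.toReal / 4) with hξ'def
  have hξ'pos : 0 < ξ' := lt_min (by positivity) (by positivity)
  have h2ξ'δ : ENNReal.ofReal (2 * ξ') < δ := by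
    have h1 : ξ' ≤ r.toReal / 4 := min_le_right _ _
    calc ENNReal.ofReal (2 * ξ') ≤ ENNReal.ofReal (r.toReal / 2) :=
          ENNReal.ofReal_le_ofReal (by linarith)
      _ < ENNReal.ofReal r.toReal := (ENNReal.ofReal_lt_ofReal_iff hrt).mpr (by linarith)
      _ = r := ENNReal.ofReal_toReal hrne
      _ ≤ δ := min_le_left _ _
  have hξ'δ : ENNReal.ofReal ξ' < δ :=
    lt_of_le_of_lt (ENNReal.ofReal_le_ofReal (by linarith)) h2ξ'δ
  have hmξ' : (m : ℝ) * ξ' < ξ / 2 := by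
    have h1 : ξ' ≤ ξ / (4 * (m + 1)) := min_le_left _ _
    have h2 : (m:ℝ) * ξ' ≤ (m:ℝ) * (ξ / (4 * ((m:ℝ) + 1))) :=
      mul_le_mul_of_nonneg_left h1 (Nat.cast_nonneg m)
    have h3 : (0:ℝ) < 4 * ((m:ℝ) + 1) := by positivity
    have h4 : (m:ℝ) * (ξ / (4 * ((m:ℝ) + 1))) < ξ / 2 := by
      rw [mul_div_assoc']
      rw [div_lt_div_iff₀ h3 two_pos]
      nlinarith [Nat.cast_nonneg (α := ℝ) m]
    linarith
  have hiso := fun i => hTiso i ξ' hξ'pos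
  set εf : Fin m → ℝ := fun i => (hiso i).choose with hεf
  have hεfpos : ∀ i, 0 < εf i := fun i => (hiso i).choose_spec.1
  have hεfspec := fun i => (hiso i).choose_spec.2
  refine ⟨Finset.univ.inf' ⟨i₀, Finset.mem_univ _⟩ εf, ?_, ?_⟩
  · refine (Finset.lt_inf'_iff _).mpr ?_
    exact fun i _ => hεfpos i
  intro Y' hY'sub hY'rect hY'meas
  set Z : Set E := toMeasurable (μH[(n:ℝ)]) Y' with hZdef
  have hZmeas : MeasurableSet Z := measurableSet_toMeasurable _ _
  have hYZ : Y' ⊆ Z := subset_toMeasurable _ _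
  have hZY : μH[(n:ℝ)] Z = μH[(n:ℝ)] Y' := measure_toMeasurable _
  have hY'fin : μH[(n:ℝ)] Y' ≠ ∞ := (hY'meas.trans ENNReal.ofReal_lt_top).ne
  obtain ⟨f, N, hflip, hN, hYNU⟩ := hY'rect
  set U : Set E := ⋃ i, range (f i) with hU
  have hUmeas : MeasurableSet U := by
    refine MeasurableSet.iUnion fun i => ?_
    obtain ⟨C, hC⟩ := hflip i
    have : range (f i) = ⋃ k, f i '' (compactCovering (EuclideanSpace ℝ (Fin n)) k) := by
      rw [← image_iUnion, iUnion_compactCovering, image_univ]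
    rw [this]
    exact MeasurableSet.iUnion fun k =>
      (((isCompact_compactCovering _ k).image hC.continuous).isClosed).measurableSet
  have hYU : μH[(n:ℝ)] (Y' \ U) = 0 :=
    measure_mono_null (fun x hx => (hYNU hx.1).resolve_right hx.2) hN
  have hYle : μH[(n:ℝ)] Y' ≤ μH[(n:ℝ)] (Z ∩ U) := by
    calc μH[(n:ℝ)] Y' ≤ μH[(n:ℝ)] (Y' ∩ U) + μH[(n:ℝ)] (Y' \ U) := by
          conv_lhs => rw [← Set.inter_union_diff Y' U]
          exact measure_union_le _ _
      _ = μH[(n:ℝ)] (Y' ∩ U) := by rw [hYU, add_zero]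
      _ ≤ μH[(n:ℝ)] (Z ∩ U) := measure_mono (inter_subset_inter_left U hYZ)
  have hZU0 : μH[(n:ℝ)] (Z \ U) = 0 := by
    have h3 : μH[(n:ℝ)] (Z ∩ U) + μH[(n:ℝ)] (Z \ U) = μH[(n:ℝ)] Z :=
      measure_inter_add_diff Z hUmeas
    have h5 : μH[(n:ℝ)] Y' + μH[(n:ℝ)] (Z \ U) ≤ μH[(n:ℝ)] Y' + 0 := by
      rw [add_zero]
      calc μH[(n:ℝ)] Y' + μH[(n:ℝ)] (Z \ U) ≤ μH[(n:ℝ)] (Z ∩ U) + μH[(n:ℝ)] (Z \ U) :=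
            add_le_add_left hYle _
        _ = μH[(n:ℝ)] Y' := by rw [h3, hZY]
    have := ENNReal.le_of_add_le_add_left hY'fin h5
    exact le_antisymm this zero_le
  have hZn1 : μH[((n:ℝ)+1)] Z = 0 := by
    refine (Measure.hausdorffMeasure_zero_or_top (by linarith : (n:ℝ) < (n:ℝ)+1) Z).resolve_right ?_
    rw [hZY]
    exact hY'fin
  have hA : ∀ i, ∃ x ∈ T i \ Z, μH[((n:ℝ)+1)] (T i) - ENNReal.ofReal ξ' <
      μH[((n:ℝ)+1)] (connectedComponentIn (T i \ Z) x) := by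
    intro i
    have hrect : IsRectifiableSet n (Z ∩ T i) := by
      refine ⟨f, Z \ U, hflip, hZU0, ?_⟩
      intro x hx
      by_cases hxU : x ∈ U
      · exact Or.inr hxU
      · exact Or.inl ⟨hx.1, hxU⟩
    have hsize : μH[(n:ℝ)] (Z ∩ T i) < ENNReal.ofReal (εf i) := by
      calc μH[(n:ℝ)] (Z ∩ T i) ≤ μH[(n:ℝ)] Z := measure_mono inter_subset_left
        _ = μH[(n:ℝ)] Y' := hZY
        _ < ENNReal.ofReal (Finset.univ.inf' ⟨i₀, Finset.mem_univ _⟩ εf) := hY'meas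
        _ ≤ ENNReal.ofReal (εf i) :=
            ENNReal.ofReal_le_ofReal (Finset.inf'_le _ (Finset.mem_univ i))
    obtain ⟨x, hx, hxc⟩ := hεfspec i (Z ∩ T i) inter_subset_right hrect hsize
    rw [diff_inter_self_eq_diff] at hx hxc
    exact ⟨x, hx, hxc⟩
  choose a ha hμa using hA
  set A : Fin m → Set E := fun i => connectedComponentIn (T i \ Z) (a i) with hAdef
  have hAconn : ∀ i, IsPreconnected (A i) := fun i => isPreconnected_connectedComponentIn
  have hAsub : ∀ i, A i ⊆ T i \ Z := fun i => connectedComponentIn_subset _ _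
  have hain : ∀ i, a i ∈ A i := fun i => mem_connectedComponentIn (ha i)
  have hAmeas : ∀ i, MeasurableSet (A i) := by
    intro i
    have := connectedComponentIn_eq_closure_inter_aux (T i \ Z) (a i)
    rw [show A i = connectedComponentIn (T i \ Z) (a i) from rfl, this]
    exact isClosed_closure.measurableSet.inter ((hTcomp i).isClosed.measurableSet.diff hZmeas)
  have hAfin : ∀ i, μH[((n:ℝ)+1)] (A i) ≠ ∞ := fun i =>
    ne_top_of_le_ne_top (hTfin i) (measure_mono ((hAsub i).trans diff_subset))
  have hμa' : ∀ i, μH[((n:ℝ)+1)] (T i) - ENNReal.ofReal ξ' < μH[((n:ℝ)+1)] (A i) := hμa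
  have hTA : ∀ i, μH[((n:ℝ)+1)] (T i \ A i) ≤ ENNReal.ofReal ξ' := by
    intro i
    have hsub : T i \ A i ⊆ (T i ∩ Z) ∪ ((T i \ Z) \ A i) := by
      intro x hx
      by_cases hxZ : x ∈ Z
      · exact Or.inl ⟨hx.1, hxZ⟩
      · exact Or.inr ⟨⟨hx.1, hxZ⟩, hx.2⟩
    have h1 : μH[((n:ℝ)+1)] (T i ∩ Z) = 0 := measure_mono_null inter_subset_right hZn1
    have h2 : μH[((n:ℝ)+1)] ((T i \ Z) \ A i)
        = μH[((n:ℝ)+1)] (T i \ Z) - μH[((n:ℝ)+1)] (A i) :=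
      measure_diff (hAsub i) (hAmeas i).nullMeasurableSet (hAfin i)
    have h4 : μH[((n:ℝ)+1)] (T i) ≤ ENNReal.ofReal ξ' + μH[((n:ℝ)+1)] (A i) :=
      tsub_le_iff_left.mp (hμa' i).le
    calc μH[((n:ℝ)+1)] (T i \ A i)
        ≤ μH[((n:ℝ)+1)] (T i ∩ Z) + μH[((n:ℝ)+1)] ((T i \ Z) \ A i) :=
          (measure_mono hsub).trans (measure_union_le _ _)
      _ = μH[((n:ℝ)+1)] (T i \ Z) - μH[((n:ℝ)+1)] (A i) := by rw [h1, h2, zero_add]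
      _ ≤ μH[((n:ℝ)+1)] (T i) - μH[((n:ℝ)+1)] (A i) :=
          tsub_le_tsub_right (measure_mono diff_subset) _
      _ ≤ ENNReal.ofReal ξ' := tsub_le_iff_right.mpr h4
  set c : Set E := connectedComponentIn (X' \ Y') (a i₀) with hc
  have hAX : ∀ i, A i ⊆ X' \ Y' := fun i =>
    (hAsub i).trans (diff_subset_diff (hTsub i) hYZ)
  have hkey : ∀ i j, A i ⊆ c → (T i ∩ T j).Nonempty → A j ⊆ c := by
    intro i j hic hij
    have hnon : (A i ∩ A j).Nonempty := by
      rw [Set.nonempty_iff_ne_empty]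
      intro hemp
      have hsub2 : T i ∩ T j ⊆ (T i \ A i) ∪ (T j \ A j) := by
        intro x hx
        by_cases hxi : x ∈ A i
        · refine Or.inr ⟨hx.2, fun hxj => ?_⟩
          have hmem : x ∈ A i ∩ A j := ⟨hxi, hxj⟩
          rw [hemp] at hmem
          exact hmem
        · exact Or.inl ⟨hx.1, hxi⟩
      have hle : δ ≤ ENNReal.ofReal (2 * ξ') := by
        calc δ ≤ μH[((n:ℝ)+1)] (T i ∩ T j) := hδle i j hij
          _ ≤ μH[((n:ℝ)+1)] (T i \ A i) + μH[((n:ℝ)+1)] (T j \ A j) :=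
              (measure_mono hsub2).trans (measure_union_le _ _)
          _ ≤ ENNReal.ofReal ξ' + ENNReal.ofReal ξ' := add_le_add (hTA i) (hTA j)
          _ = ENNReal.ofReal (2 * ξ') := by
              rw [← ENNReal.ofReal_add hξ'pos.le hξ'pos.le]
              ring_nf
      exact absurd hle (not_le.mpr h2ξ'δ)
    obtain ⟨x, hxi, hxj⟩ := hnon
    have hconn : IsPreconnected (A i ∪ A j) :=
      (hAconn i).union x hxi hxj (hAconn j)
    have hsubc : A i ∪ A j ⊆ connectedComponentIn (X' \ Y') x :=
      hconn.subset_connectedComponentIn (Or.inl hxi) (union_subset (hAX i) (hAX j))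
    have hxc : connectedComponentIn (X' \ Y') x = c := (connectedComponentIn_eq
      (show x ∈ connectedComponentIn (X' \ Y') (a i₀) from hic hxi)).symm
    exact subset_union_right.trans (hsubc.trans (subset_of_eq hxc))
  have hi₀c : A i₀ ⊆ c :=
    (hAconn i₀).subset_connectedComponentIn (hain i₀) (hAX i₀)
  have hallc : ∀ j, A j ⊆ c := by
    set I : Set (Fin m) := {i | A i ⊆ c} with hI
    have hUc : IsClosed (⋃ i ∈ I, T i) :=
      (Set.toFinite I).isClosed_biUnion fun i _ => (hTcomp i).isClosed
    have hVc : IsClosed (⋃ i ∈ Iᶜ, T i) :=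
      (Set.toFinite Iᶜ).isClosed_biUnion fun i _ => (hTcomp i).isClosed
    have hcover : X' ⊆ (⋃ i ∈ I, T i) ∪ (⋃ i ∈ Iᶜ, T i) := by
      intro x hx
      rw [hTcover] at hx
      obtain ⟨i, hi⟩ := mem_iUnion.mp hx
      by_cases hiI : i ∈ I
      · exact Or.inl (mem_biUnion hiI hi)
      · exact Or.inr (mem_biUnion hiI hi)
    have hdisj : Disjoint (⋃ i ∈ I, T i) (⋃ i ∈ Iᶜ, T i) := by
      rw [Set.disjoint_left]
      intro x hxU hxV
      obtain ⟨i, hiI, hxi⟩ := mem_iUnion₂.mp hxU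
      obtain ⟨j, hjI, hxj⟩ := mem_iUnion₂.mp hxV
      exact hjI (hkey i j hiI ⟨x, hxi, hxj⟩)
    rcases (isPreconnected_iff_subset_of_fully_disjoint_closed hX'c.isClosed).mp
        hX'conn.isPreconnected _ _ hUc hVc hcover hdisj with hXU | hXV
    · intro j
      obtain ⟨y, hy⟩ := hTne j
      obtain ⟨i, hiI, hyi⟩ := mem_iUnion₂.mp (hXU (hTsub j hy))
      exact hkey i j hiI ⟨y, hyi, hy⟩
    · exfalso
      obtain ⟨y, hy⟩ := hTne i₀
      obtain ⟨j, hjI, hyj⟩ := mem_iUnion₂.mp (hXV (hTsub i₀ hy))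
      exact hjI (hkey i₀ j hi₀c ⟨y, hy, hyj⟩)
  have hcompl : μH[((n:ℝ)+1)] (X' \ ⋃ j, A j) ≤ (m : ℝ≥0∞) * ENNReal.ofReal ξ' := by
    have hsub : X' \ ⋃ j, A j ⊆ ⋃ j, (T j \ A j) := by
      intro x hx
      have hx1 := hx.1
      rw [hTcover] at hx1
      obtain ⟨j, hj⟩ := mem_iUnion.mp hx1
      exact mem_iUnion.mpr ⟨j, hj, fun hAj => hx.2 (mem_iUnion.mpr ⟨j, hAj⟩)⟩
    calc μH[((n:ℝ)+1)] (X' \ ⋃ j, A j) ≤ ∑' j, μH[((n:ℝ)+1)] (T j \ A j) :=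
          (measure_mono hsub).trans (measure_iUnion_le _)
      _ = ∑ j, μH[((n:ℝ)+1)] (T j \ A j) := tsum_fintype _
      _ ≤ ∑ _j : Fin m, ENNReal.ofReal ξ' := Finset.sum_le_sum fun j _ => hTA j
      _ = (m : ℝ≥0∞) * ENNReal.ofReal ξ' := by
          rw [Finset.sum_const, Finset.card_univ, Fintype.card_fin, nsmul_eq_mul]
  have hXle : μH[((n:ℝ)+1)] X' ≤ μH[((n:ℝ)+1)] c + (m : ℝ≥0∞) * ENNReal.ofReal ξ' := by
    have hsub : X' ⊆ c ∪ (X' \ ⋃ j, A j) := by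
      intro x hx
      by_cases hxA : x ∈ ⋃ j, A j
      · obtain ⟨j, hj⟩ := mem_iUnion.mp hxA
        exact Or.inl (hallc j hj)
      · exact Or.inr ⟨hx, hxA⟩
    exact (measure_mono hsub).trans ((measure_union_le _ _).trans (add_le_add_right hcompl _))
  have hcfin : μH[((n:ℝ)+1)] c ≠ ∞ :=
    ne_top_of_le_ne_top hX'fin (measure_mono ((connectedComponentIn_subset _ _).trans diff_subset))
  have hcpos : 0 < μH[((n:ℝ)+1)] c := by
    have hδT : δ ≤ μH[((n:ℝ)+1)] (T i₀) := by
      have h6 := hδle i₀ i₀ (by simpa using hTne i₀)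
      rwa [inter_self] at h6
    calc (0:ℝ≥0∞) < δ - ENNReal.ofReal ξ' := tsub_pos_of_lt hξ'δ
      _ ≤ μH[((n:ℝ)+1)] (T i₀) - ENNReal.ofReal ξ' := tsub_le_tsub_right hδT _
      _ < μH[((n:ℝ)+1)] (A i₀) := hμa' i₀
      _ ≤ μH[((n:ℝ)+1)] c := measure_mono (hallc i₀)
  refine ⟨a i₀, ⟨hTsub i₀ (ha i₀).1, fun h => (ha i₀).2 (hYZ h)⟩, ?_⟩
  by_cases hcase : μH[((n:ℝ)+1)] X' ≤ ENNReal.ofReal (ξ / 2)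
  · rw [tsub_eq_zero_of_le hcase]
    exact hcpos
  · push_neg at hcase
    rw [ENNReal.sub_lt_iff_lt_right ENNReal.ofReal_ne_top hcase.le]
    calc μH[((n:ℝ)+1)] X' ≤ μH[((n:ℝ)+1)] c + (m : ℝ≥0∞) * ENNReal.ofReal ξ' := hXle
      _ < μH[((n:ℝ)+1)] c + ENNReal.ofReal (ξ / 2) := by
          refine ENNReal.add_lt_add_left hcfin ?_
          calc (m : ℝ≥0∞) * ENNReal.ofReal ξ' = ENNReal.ofReal ((m:ℝ) * ξ') := by
                rw [ENNReal.ofReal_mul (Nat.cast_nonneg m), ENNReal.ofReal_natCast]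
            _ < ENNReal.ofReal (ξ / 2) :=
                (ENNReal.ofReal_lt_ofReal_iff (by positivity)).mpr hmξ'


end
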